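/- Let Θ be a symmetric positive definite p×p real matrix with Σ = Θ^{-1}. Suppose Θ_{1,j} = 0 for all j with d < j ≤ p (for some 1 ≤ d < p). Then the (1,1) entry of the inverse of the top-left d×d block of Σ equals Θ_{1,1}. -/

import Mathlib

open Matrix

/-- Sum over `Fin p` of a function vanishing on indices `≥ d` equals the sum over `Fin d`. -/
lemma sum_fin_castLE_of_vanish {p d : ℕ} (hdp : d ≤ p) (f : Fin p → ℝ)
    (hf : ∀ j : Fin p, d ≤ (j : ℕ) → f j = 0) :
    ∑ j : Fin p, f j = ∑ j : Fin d, f (Fin.castLE hdp j) := by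
  classical
  show ∑ j : Fin p, f j = ∑ j : Fin d, f (Fin.castLEEmb hdp j)
  rw [← Finset.sum_map Finset.univ (Fin.castLEEmb hdp) f]
  refine (Finset.sum_subset (Finset.subset_univ _) ?_).symm
  intro j _ hj
  refine hf j ?_
  by_contra h
  push_neg at h
  exact hj (Finset.mem_map.mpr ⟨⟨(j : ℕ), h⟩, Finset.mem_univ _, by
    simp [Fin.castLEEmb, Fin.ext_iff]⟩)

/-- Let `Θ` be a symmetric positive definite `p×p` matrix with `Σ = Θ⁻¹`.
If `Θ_{1,j} = 0` for all `j` with `d < j ≤ p` (0-based: all column indices `≥ d`), then the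
(1,1) entry of the inverse of the top-left `d×d` block of `Σ` equals `Θ_{1,1}`. -/
theorem inv_of_cov_block_entry_eq_precision_entry
    (p d : ℕ) (hd : 0 < d) (hdp : d < p)
    (Θ : Matrix (Fin p) (Fin p) ℝ) (hsym : Θ.IsSymm) (hpd : Θ.PosDef)
    (hzero : ∀ j : Fin p, d ≤ (j : ℕ) → Θ ⟨0, hd.trans hdp⟩ j = 0) :
    (((Θ⁻¹).submatrix (Fin.castLE hdp.le) (Fin.castLE hdp.le))⁻¹) ⟨0, hd⟩ ⟨0, hd⟩
      = Θ ⟨0, hd.trans hdp⟩ ⟨0, hd.trans hdp⟩ := by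
  classical
  set z : Fin p := ⟨0, hd.trans hdp⟩ with hz
  set S : Matrix (Fin d) (Fin d) ℝ :=
    (Θ⁻¹).submatrix (Fin.castLE hdp.le) (Fin.castLE hdp.le) with hS
  -- column 1 of Θ vanishes beyond d
  have hcol : ∀ j : Fin p, d ≤ (j : ℕ) → Θ j z = 0 := by
    intro j hj
    have := hsym.apply j z
    rw [← this]
    exact hzero j hj
  -- S is positive definite
  have hinv : (Θ⁻¹).PosDef := hpd.inv
  have hSpd : S.PosDef := by
    refine Matrix.PosDef.of_dotProduct_mulVec_pos ?_ ?_
    · have := hinv.1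
      ext i j
      simpa [S, Matrix.IsHermitian] using (congrFun (congrFun this (Fin.castLE hdp.le j))
        (Fin.castLE hdp.le i)).symm
    · intro x hx
      set y : Fin p → ℝ := fun j => if h : (j : ℕ) < d then x ⟨(j : ℕ), h⟩ else 0 with hy
      have hy0 : y ≠ 0 := by
        intro h
        apply hx
        funext i
        have := congrFun h (Fin.castLE hdp.le i)
        simpa [y, i.isLt] using this
      have key : star x ⬝ᵥ S.mulVec x = star y ⬝ᵥ (Θ⁻¹).mulVec y := by
        simp only [dotProduct, Matrix.mulVec, dotProduct, Pi.star_apply]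
        rw [sum_fin_castLE_of_vanish hdp.le (f := fun i => star (y i) *
          ∑ j : Fin p, Θ⁻¹ i j * y j)]
        · refine Finset.sum_congr rfl fun i _ => ?_
          rw [sum_fin_castLE_of_vanish hdp.le (f := fun j => Θ⁻¹ (Fin.castLE hdp.le i) j * y j)]
          · simp [y, S, i.isLt]
          · intro j hj
            simp [y, Nat.not_lt.mpr hj]
        · intro i hi
          simp [y, Nat.not_lt.mpr hi]
      rw [key]
      exact hinv.dotProduct_mulVec_pos hy0
  -- invertibility facts
  have hΘunit : IsUnit Θ.det := isUnit_iff_ne_zero.mpr hpd.det_pos.ne'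
  have hSunit : IsUnit S.det := isUnit_iff_ne_zero.mpr hSpd.det_pos.ne'
  -- the vector u : first column of Θ restricted to the block
  set u : Fin d → ℝ := fun j => Θ (Fin.castLE hdp.le j) z with hu
  have hmul : S.mulVec u = Pi.single (⟨0, hd⟩ : Fin d) 1 := by
    funext i
    have full : ∑ j : Fin p, Θ⁻¹ (Fin.castLE hdp.le i) j * Θ j z
        = (Θ⁻¹ * Θ) (Fin.castLE hdp.le i) z := by
      simp [Matrix.mul_apply]
    have : S.mulVec u i = (Θ⁻¹ * Θ) (Fin.castLE hdp.le i) z := by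
      rw [← full, Matrix.mulVec]
      rw [sum_fin_castLE_of_vanish hdp.le (f := fun j => Θ⁻¹ (Fin.castLE hdp.le i) j * Θ j z)]
      · simp [S, u, dotProduct]
      · intro j hj
        simp [hcol j hj]
    rw [this, Matrix.nonsing_inv_mul Θ hΘunit]
    by_cases h : i = ⟨0, hd⟩
    · subst h
      simp [Matrix.one_apply, z, Fin.ext_iff, Pi.single_eq_same]
    · have hne : Fin.castLE hdp.le i ≠ z := by
        intro hc
        apply h
        apply Fin.ext
        simpa [z, Fin.ext_iff] using hc
      simp [Matrix.one_apply, hne, Pi.single_eq_of_ne h]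
  have hu' : u = S⁻¹.mulVec (Pi.single (⟨0, hd⟩ : Fin d) 1) := by
    rw [← hmul, Matrix.mulVec_mulVec, Matrix.nonsing_inv_mul S hSunit, Matrix.one_mulVec]
  have := congrFun hu' ⟨0, hd⟩
  simpa [u, Matrix.mulVec_single, z] using this.symm
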